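/- Let Ω ⊆ ℝ^n be open, let r ≥ 1, and let f_1,…,f_r : Ω → ℝ be C² functions. Then at every point of Ω, Δ log(Σ_{j=1}^r e^{f_j}) ≥ (Σ_{j=1}^r (Δ f_j) e^{f_j}) / (Σ_{j=1}^r e^{f_j}). (This log-sum-exp Laplacian inequality is the key analytic step in the proofs of Theorems 1.3 and 1.4; in the paper's geometric-Laplacian sign convention it reads Δ_{g_M} log(Σ e^{f_j}) ≤ (Σ (Δ_{g_M} f_j) e^{f_j})/(Σ e^{f_j}).) -/

import Mathlib

/-- The Euclidean Laplacian `Δf = Σ_i ∂²f/∂x_i²` (componentwise for vector-valued `f`). -/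
noncomputable def lap {n : ℕ} {F : Type*} [NormedAddCommGroup F] [NormedSpace ℝ F]
    (f : EuclideanSpace ℝ (Fin n) → F) (x : EuclideanSpace ℝ (Fin n)) : F :=
  ∑ i : Fin n, iteratedFDeriv ℝ 2 f x (fun _ => EuclideanSpace.single i 1)


lemma lse_alg (n r : ℕ) [Nonempty (Fin r)] (c : Fin r → ℝ) (hc : ∀ j, 0 ≤ c j)
    (s : ℝ) (hs : s = ∑ j, c j) (hspos : 0 < s)
    (a h2 : Fin r → Fin n → ℝ) :
    (∑ j : Fin r, (∑ i : Fin n, h2 j i) * c j) / s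
      ≤ ∑ i : Fin n,
          (s⁻¹ * (∑ j : Fin r, (c j * h2 j i + c j * a j i * a j i))
            + -(s ^ 2)⁻¹ * (∑ j : Fin r, c j * a j i) * (∑ j : Fin r, c j * a j i)) := by
  have hCS : ∀ i, (∑ j, c j * a j i) * (∑ j, c j * a j i) ≤
      s * ∑ j, c j * a j i * a j i := by
    intro i
    have key := Finset.sum_mul_sq_le_sq_mul_sq Finset.univ
      (fun j => Real.sqrt (c j)) (fun j => Real.sqrt (c j) * a j i)
    have e1 : ∀ j : Fin r, Real.sqrt (c j) * (Real.sqrt (c j) * a j i) = c j * a j i := by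
      intro j; rw [← mul_assoc, Real.mul_self_sqrt (hc j)]
    have e2 : ∀ j : Fin r, Real.sqrt (c j) ^ 2 = c j := fun j => Real.sq_sqrt (hc j)
    have e3 : ∀ j : Fin r, (Real.sqrt (c j) * a j i) ^ 2 = c j * a j i * a j i := by
      intro j; rw [mul_pow, Real.sq_sqrt (hc j)]; ring
    simp only [e1, e2, e3] at key
    calc (∑ j, c j * a j i) * (∑ j, c j * a j i) = (∑ j, c j * a j i) ^ 2 := by ring
      _ ≤ (∑ j, c j) * ∑ j, c j * a j i * a j i := key
      _ = s * ∑ j, c j * a j i * a j i := by rw [hs]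
  have hsum_split : ∑ i : Fin n,
      (s⁻¹ * (∑ j : Fin r, (c j * h2 j i + c j * a j i * a j i))
        + -(s ^ 2)⁻¹ * (∑ j : Fin r, c j * a j i) * (∑ j : Fin r, c j * a j i))
      = s⁻¹ * (∑ j : Fin r, (∑ i : Fin n, h2 j i) * c j)
        + (s⁻¹ * (∑ i : Fin n, ∑ j : Fin r, c j * a j i * a j i)
          - (s ^ 2)⁻¹ * ∑ i : Fin n, ((∑ j, c j * a j i) * (∑ j, c j * a j i))) := by
    have h0 : ∀ i : Fin n,
        s⁻¹ * (∑ j : Fin r, (c j * h2 j i + c j * a j i * a j i))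
          + -(s ^ 2)⁻¹ * (∑ j : Fin r, c j * a j i) * (∑ j : Fin r, c j * a j i)
        = s⁻¹ * (∑ j : Fin r, (c j * h2 j i + c j * a j i * a j i))
          - (s ^ 2)⁻¹ * ((∑ j : Fin r, c j * a j i) * (∑ j : Fin r, c j * a j i)) := by
      intro i; ring
    rw [Finset.sum_congr rfl fun i _ => h0 i, Finset.sum_sub_distrib,
      ← Finset.mul_sum, ← Finset.mul_sum]
    have h1 : ∑ i : Fin n, ∑ j : Fin r, (c j * h2 j i + c j * a j i * a j i)
        = (∑ j : Fin r, (∑ i : Fin n, h2 j i) * c j)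
            + ∑ i : Fin n, ∑ j : Fin r, c j * a j i * a j i := by
      simp only [Finset.sum_add_distrib]
      congr 1
      rw [Finset.sum_comm]
      refine Finset.sum_congr rfl fun j _ => ?_
      rw [← Finset.mul_sum]
      ring
    rw [h1]
    ring
  rw [hsum_split]
  have hQP : (s ^ 2)⁻¹ * ∑ i : Fin n, ((∑ j, c j * a j i) * (∑ j, c j * a j i))
      ≤ s⁻¹ * ∑ i : Fin n, ∑ j : Fin r, c j * a j i * a j i := by
    have h1 : ∑ i : Fin n, ((∑ j, c j * a j i) * (∑ j, c j * a j i))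
        ≤ s * ∑ i : Fin n, ∑ j : Fin r, c j * a j i * a j i := by
      rw [Finset.mul_sum]
      exact Finset.sum_le_sum fun i _ => hCS i
    calc (s ^ 2)⁻¹ * ∑ i : Fin n, ((∑ j, c j * a j i) * (∑ j, c j * a j i))
        ≤ (s ^ 2)⁻¹ * (s * ∑ i : Fin n, ∑ j : Fin r, c j * a j i * a j i) :=
          mul_le_mul_of_nonneg_left h1 (by positivity)
      _ = s⁻¹ * ∑ i : Fin n, ∑ j : Fin r, c j * a j i * a j i := by
          field_simp
  rw [div_eq_inv_mul, mul_comm s⁻¹]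
  nlinarith [hQP]

/-- Log-sum-exp Laplacian inequality (key analytic step of Theorems 1.3 and 1.4):
for `C²` functions `f_1, …, f_r` on an open `Ω ⊆ ℝ^n`,
`Δ log(Σ_j e^{f_j}) ≥ (Σ_j (Δf_j) e^{f_j}) / (Σ_j e^{f_j})` on `Ω`. -/
theorem log_sum_exp_laplacian (n r : ℕ) (hr : 1 ≤ r)
    (Ω : Set (EuclideanSpace ℝ (Fin n))) (hΩ : IsOpen Ω)
    (f : Fin r → EuclideanSpace ℝ (Fin n) → ℝ)
    (hf : ∀ j, ContDiffOn ℝ 2 (f j) Ω) :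
    ∀ x ∈ Ω,
      (∑ j : Fin r, lap (f j) x * Real.exp (f j x)) / (∑ j : Fin r, Real.exp (f j x))
        ≤ lap (fun y => Real.log (∑ j : Fin r, Real.exp (f j y))) x := by
  intro x hx
  haveI : Nonempty (Fin r) := Fin.pos_iff_nonempty.mp hr
  have hmem : Ω ∈ nhds x := hΩ.mem_nhds hx
  have hd1 : ∀ j, ∀ y ∈ Ω, DifferentiableAt ℝ (f j) y := by
    intro j y hy
    exact ((hf j).differentiableOn (by norm_num)).differentiableAt (hΩ.mem_nhds hy)
  have hC1 : ∀ j, ContDiffOn ℝ 1 (fderiv ℝ (f j)) Ω := fun j =>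
    (hf j).fderiv_of_isOpen (m := 1) hΩ (by norm_num)
  have hd2 : ∀ j, DifferentiableAt ℝ (fderiv ℝ (f j)) x := fun j =>
    ((hC1 j).differentiableOn one_ne_zero).differentiableAt hmem
  set S : EuclideanSpace ℝ (Fin n) → ℝ := fun y => ∑ j, Real.exp (f j y) with hSdef
  have hSpos : ∀ y, 0 < S y := fun y =>
    Finset.sum_pos (fun j _ => Real.exp_pos _) Finset.univ_nonempty
  have hS1 : ∀ y ∈ Ω, HasFDerivAt S (∑ j, Real.exp (f j y) • fderiv ℝ (f j) y) y := by
    intro y hy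
    exact HasFDerivAt.fun_sum fun j _ => ((hd1 j y hy).hasFDerivAt).exp
  set B : Fin r → (EuclideanSpace ℝ (Fin n) →L[ℝ] EuclideanSpace ℝ (Fin n) →L[ℝ] ℝ) := fun j =>
    Real.exp (f j x) • fderiv ℝ (fderiv ℝ (f j)) x +
      (Real.exp (f j x) • fderiv ℝ (f j) x).smulRight (fderiv ℝ (f j) x) with hBdef
  have hG : HasFDerivAt (fun y => ∑ j, Real.exp (f j y) • fderiv ℝ (f j) y) (∑ j, B j) x := by
    refine HasFDerivAt.fun_sum fun j _ => ?_
    exact (((hd1 j x hx).hasFDerivAt).exp).smul (hd2 j).hasFDerivAt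
  set L : EuclideanSpace ℝ (Fin n) → ℝ := fun y => Real.log (S y) with hLdef
  have hL1 : ∀ y ∈ Ω,
      HasFDerivAt L ((S y)⁻¹ • ∑ j, Real.exp (f j y) • fderiv ℝ (f j) y) y := by
    intro y hy
    exact (hS1 y hy).log (hSpos y).ne'
  have hfL : fderiv ℝ L =ᶠ[nhds x]
      fun y => (S y)⁻¹ • ∑ j, Real.exp (f j y) • fderiv ℝ (f j) y := by
    filter_upwards [hmem] with y hy
    exact (hL1 y hy).fderiv
  set G : EuclideanSpace ℝ (Fin n) →L[ℝ] ℝ := ∑ j, Real.exp (f j x) • fderiv ℝ (f j) x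
    with hGdef
  have hinv : HasFDerivAt (fun y => (S y)⁻¹) ((-(S x ^ 2)⁻¹) • G) x :=
    (hasDerivAt_inv (hSpos x).ne').comp_hasFDerivAt x (hS1 x hx)
  have hL2 : fderiv ℝ (fderiv ℝ L) x =
      (S x)⁻¹ • (∑ j, B j) + ((-(S x ^ 2)⁻¹) • G).smulRight G := by
    rw [hfL.fderiv_eq]
    exact (hinv.smul hG).fderiv
  -- evaluate the second derivative of L on basis vectors
  have hGapp : ∀ w : EuclideanSpace ℝ (Fin n),
      G w = ∑ j, Real.exp (f j x) * fderiv ℝ (f j) x w := by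
    intro w
    rw [hGdef]
    simp [ContinuousLinearMap.sum_apply]
  have hBapp : ∀ (j) (w : EuclideanSpace ℝ (Fin n)),
      B j w w = Real.exp (f j x) * fderiv ℝ (fderiv ℝ (f j)) x w w
        + Real.exp (f j x) * fderiv ℝ (f j) x w * fderiv ℝ (f j) x w := by
    intro j w
    rw [hBdef]
    simp only [ContinuousLinearMap.add_apply, ContinuousLinearMap.smul_apply,
      ContinuousLinearMap.smulRight_apply, smul_eq_mul]
  have happly : ∀ i : Fin n,
      fderiv ℝ (fderiv ℝ L) x (EuclideanSpace.single i (1:ℝ)) (EuclideanSpace.single i (1:ℝ))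
        = (S x)⁻¹ * (∑ j, (Real.exp (f j x)
              * fderiv ℝ (fderiv ℝ (f j)) x (EuclideanSpace.single i (1:ℝ))
                  (EuclideanSpace.single i (1:ℝ))
            + Real.exp (f j x) * fderiv ℝ (f j) x (EuclideanSpace.single i (1:ℝ))
              * fderiv ℝ (f j) x (EuclideanSpace.single i (1:ℝ))))
          + -(S x ^ 2)⁻¹
              * (∑ j, Real.exp (f j x) * fderiv ℝ (f j) x (EuclideanSpace.single i (1:ℝ)))
              * (∑ j, Real.exp (f j x) * fderiv ℝ (f j) x (EuclideanSpace.single i (1:ℝ))) := by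
    intro i
    set w := EuclideanSpace.single i (1:ℝ)
    rw [hL2]
    rw [ContinuousLinearMap.add_apply, ContinuousLinearMap.add_apply,
      ContinuousLinearMap.smul_apply, ContinuousLinearMap.smul_apply,
      ContinuousLinearMap.smulRight_apply, ContinuousLinearMap.smul_apply,
      ContinuousLinearMap.smul_apply, ContinuousLinearMap.sum_apply,
      ContinuousLinearMap.sum_apply, smul_eq_mul, smul_eq_mul, smul_eq_mul, hGapp]
    simp only [hBapp]
  have hlapf : ∀ j, lap (f j) x = ∑ i : Fin n,
      fderiv ℝ (fderiv ℝ (f j)) x (EuclideanSpace.single i (1:ℝ))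
        (EuclideanSpace.single i (1:ℝ)) := by
    intro j
    exact Finset.sum_congr rfl fun i _ => iteratedFDeriv_two_apply (f j) x _
  have hlapL : lap L x = ∑ i : Fin n,
      ((S x)⁻¹ * (∑ j, (Real.exp (f j x)
              * fderiv ℝ (fderiv ℝ (f j)) x (EuclideanSpace.single i (1:ℝ))
                  (EuclideanSpace.single i (1:ℝ))
            + Real.exp (f j x) * fderiv ℝ (f j) x (EuclideanSpace.single i (1:ℝ))
              * fderiv ℝ (f j) x (EuclideanSpace.single i (1:ℝ))))
          + -(S x ^ 2)⁻¹
              * (∑ j, Real.exp (f j x) * fderiv ℝ (f j) x (EuclideanSpace.single i (1:ℝ)))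
              * (∑ j, Real.exp (f j x) * fderiv ℝ (f j) x (EuclideanSpace.single i (1:ℝ)))) := by
    refine Finset.sum_congr rfl fun i _ => ?_
    rw [iteratedFDeriv_two_apply]
    exact happly i
  have hLgoal : lap (fun y => Real.log (∑ j : Fin r, Real.exp (f j y))) x = lap L x := rfl
  rw [hLgoal, hlapL]
  have hfin := lse_alg n r (fun j => Real.exp (f j x)) (fun j => Real.exp_nonneg _)
    (S x) rfl (hSpos x)
    (fun j i => fderiv ℝ (f j) x (EuclideanSpace.single i (1:ℝ)))
    (fun j i => fderiv ℝ (fderiv ℝ (f j)) x (EuclideanSpace.single i (1:ℝ))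
      (EuclideanSpace.single i (1:ℝ)))
  calc (∑ j : Fin r, lap (f j) x * Real.exp (f j x)) / (∑ j : Fin r, Real.exp (f j x))
      = (∑ j : Fin r, (∑ i : Fin n, fderiv ℝ (fderiv ℝ (f j)) x
          (EuclideanSpace.single i (1:ℝ)) (EuclideanSpace.single i (1:ℝ)))
          * Real.exp (f j x)) / S x := by
        rw [hSdef]
        congr 1
        exact Finset.sum_congr rfl fun j _ => by rw [hlapf j]
    _ ≤ _ := hfin
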